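/- The vortex-sheet boundary is characteristic of constant multiplicity two: let m, n, v, u ∈ ℝ with m > 0, n > 0, let p_m = p_n =: q > 0, and let Φₜ, Φ₁ ∈ ℝ satisfy the eikonal relation Φₜ + v·Φ₁ − u = 0. Then the 4×4 real matrix A₂(U) − Φₜ·I₄ − Φ₁·A₁(U) has rank exactly 2 (equivalently, its kernel has dimension 2). -/

import Mathlib

/-- The coefficient matrix `A₁(U)` of the quasilinear two-phase flow system,
for `U = (m,n,v,u)` and pressure partial derivatives `pm, pn`. -/
noncomputable def A1 (m n v u pm pn : ℝ) : Matrix (Fin 4) (Fin 4) ℝ :=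
  !![v, 0, m, 0;
     0, v, n, 0;
     pm / n, pn / n, v, 0;
     0, 0, 0, v]

/-- The coefficient matrix `A₂(U)` of the quasilinear two-phase flow system. -/
noncomputable def A2 (m n v u pm pn : ℝ) : Matrix (Fin 4) (Fin 4) ℝ :=
  !![u, 0, 0, m;
     0, u, 0, n;
     0, 0, u, 0;
     pm / n, pn / n, 0, u]

/-- The vortex-sheet boundary is characteristic of constant multiplicity two:
for `m, n, q > 0`, `p_m = p_n = q`, and `Φₜ + v·Φ₁ − u = 0`, the boundary matrix
`A₂(U) − Φₜ·I₄ − Φ₁·A₁(U)` has rank exactly 2. -/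
theorem boundary_matrix_rank_two (m n v u q Φt Φ1 : ℝ) (hm : 0 < m) (hn : 0 < n)
    (hq : 0 < q) (heik : Φt + v * Φ1 - u = 0) :
    (A2 m n v u q q - Φt • (1 : Matrix (Fin 4) (Fin 4) ℝ)
      - Φ1 • A1 m n v u q q).rank = 2 := by
  set M : Matrix (Fin 4) (Fin 4) ℝ :=
    !![0, 0, -Φ1 * m, m;
       0, 0, -Φ1 * n, n;
       -Φ1 * (q / n), -Φ1 * (q / n), 0, 0;
       q / n, q / n, 0, 0] with hMdef
  have hM : A2 m n v u q q - Φt • (1 : Matrix (Fin 4) (Fin 4) ℝ)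
      - Φ1 • A1 m n v u q q = M := by
    ext i j
    fin_cases i <;> fin_cases j <;>
      simp [A1, A2, Matrix.one_apply, hMdef, Matrix.vecHead, Matrix.vecTail] <;> linarith
  rw [hM]
  -- factorization M = B * C gives rank ≤ 2
  have hle : M.rank ≤ 2 := by
    have hfac : M = (!![m, 0; n, 0; 0, -Φ1; 0, 1] : Matrix (Fin 4) (Fin 2) ℝ) *
        (!![0, 0, -Φ1, 1; q / n, q / n, 0, 0] : Matrix (Fin 2) (Fin 4) ℝ) := by
      ext i j
      fin_cases i <;> fin_cases j <;>
        simp [Matrix.mul_apply, Fin.sum_univ_two, hMdef, Matrix.vecHead, Matrix.vecTail] <;> ring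
    calc M.rank ≤ (!![0, 0, -Φ1, 1; q / n, q / n, 0, 0] : Matrix (Fin 2) (Fin 4) ℝ).rank := by
          rw [hfac]; exact Matrix.rank_mul_le_right _ _
      _ ≤ 2 := Matrix.rank_le_height _
  -- lower bound: S * M * T is invertible 2×2
  have hge : 2 ≤ M.rank := by
    set S : Matrix (Fin 2) (Fin 4) ℝ := !![0, 1, 0, 0; 0, 0, 0, 1] with hS
    set T : Matrix (Fin 4) (Fin 2) ℝ := !![1, 0; 0, 0; 0, 0; 0, 1] with hT
    have hprod : S * M * T = !![0, n; q / n, 0] := by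
      ext i j
      fin_cases i <;> fin_cases j <;>
        simp [Matrix.mul_apply, Fin.sum_univ_four, Fin.sum_univ_two, hS, hT, hMdef, Matrix.vecHead, Matrix.vecTail]
    have hdet : IsUnit (!![(0 : ℝ), n; q / n, 0]).det := by
      have : (!![(0 : ℝ), n; q / n, 0]).det = -q := by
        rw [Matrix.det_fin_two_of]
        field_simp
        ring
      rw [this]
      simpa using hq.ne'
    have hrank2 : (!![(0 : ℝ), n; q / n, 0] : Matrix (Fin 2) (Fin 2) ℝ).rank = 2 := by
      rw [Matrix.rank_of_isUnit _ ((Matrix.isUnit_iff_isUnit_det _).mpr hdet)]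
      simp
    calc (2 : ℕ) = (S * M * T).rank := by rw [hprod, hrank2]
      _ = (S * (M * T)).rank := by rw [Matrix.mul_assoc]
      _ ≤ (M * T).rank := Matrix.rank_mul_le_right _ _
      _ ≤ M.rank := Matrix.rank_mul_le_left _ _
  omega
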